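/- Assume E_c is a critical energy of the random polymer model and κ := |⟨e^{2iη_±}⟩| < 1. Then there exist C < ∞ and δ₀ > 0 such that for every r ∈ ℕ, every real δ with |δ| ≤ δ₀ and every θ ∈ ℝ, there is a measurable function X : Ω₀ → ℂ depending only on the coordinates ω₀,…,ω_{r−1}, with E₀(X) = 0 and |X(ω)| ≤ 2 for all ω, such that | e^{2i·S_{δ,ω}^r(θ)} − X(ω)·e^{2iθ} | ≤ C·( r·|δ| + κ^r ) for every ω ∈ Ω₀. -/

import Mathlib

open MeasureTheory Filter
open scoped BigOperators ENNReal

noncomputable section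

/-- Single-site transfer matrix `T_{v,t}`. -/
def Tst (v t : ℝ) : Matrix (Fin 2) (Fin 2) ℝ := (1 / t) • !![v, -t ^ 2; 1, 0]

/-- Transfer matrix over one polymer block of length `L`. -/
def Tblock (L : ℕ) (vh th : ℕ → ℝ) (E : ℝ) : Matrix (Fin 2) (Fin 2) ℝ :=
  ((List.range L).reverse.map fun j => Tst (vh j - E) (th j)).prod

/-- The transfer matrix of the polymer of sign `s` at energy `E`. -/
def Tpoly (L : Bool → ℕ) (vh th : Bool → ℕ → ℝ) (E : ℝ) (s : Bool) :
    Matrix (Fin 2) (Fin 2) ℝ :=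
  Tblock (L s) (vh s) (th s) E

/-- Transfer matrix over the polymers `m, m+1, …, k-1`. -/
def TW (L : Bool → ℕ) (vh th : Bool → ℕ → ℝ) (ω : ℤ → Bool) (E : ℝ) (k m : ℤ) :
    Matrix (Fin 2) (Fin 2) ℝ :=
  ((List.range (k - m).toNat).map fun i => Tpoly L vh th E (ω (k - 1 - i))).prod

/-- Rotation matrix by angle `η`. -/
def rotMat (η : ℝ) : Matrix (Fin 2) (Fin 2) ℝ :=
  !![Real.cos η, -Real.sin η; Real.sin η, Real.cos η]

/-- Euclidean operator norm of a real 2×2 matrix. -/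
def opNormR (A : Matrix (Fin 2) (Fin 2) ℝ) : ℝ := ‖Matrix.toEuclideanCLM (𝕜 := ℝ) A‖

/-- Average `⟨c±⟩ = p₊ c₊ + p₋ c₋` (real version). -/
def avgR (p : ℝ) (c : Bool → ℝ) : ℝ := p * c true + (1 - p) * c false

/-- Average `⟨c±⟩ = p₊ c₊ + p₋ c₋` (complex version). -/
def avgC (p : ℝ) (c : Bool → ℂ) : ℂ := p * c true + (1 - p) * c false

/-- Iterated polymer phase shifts. -/
def Sit (S : Bool → ℝ → ℝ → ℝ) (ω : ℤ → Bool) (ε : ℝ) : ℕ → ℝ → ℝ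
  | 0, θ => θ
  | l + 1, θ => S (ω l) ε (Sit S ω ε l θ)


namespace Stmt10Aux

open Polynomial ProbabilityTheory

lemma polyLip (P : Polynomial ℝ) :
    ∃ K : ℝ, 0 ≤ K ∧ ∀ δ : ℝ, |δ| ≤ 1 → |P.eval δ - P.eval 0| ≤ K * |δ| := by
  obtain ⟨Q, hQ⟩ : (Polynomial.X : Polynomial ℝ) ∣ (P - C (P.eval 0)) := by
    simpa using dvd_iff_isRoot.mpr (show IsRoot (P - C (P.eval 0)) 0 by simp [IsRoot])
  obtain ⟨K0, hK0⟩ := (isCompact_Icc (a := (-1:ℝ)) (b := 1)).exists_bound_of_continuousOn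
    (Polynomial.continuous Q).continuousOn
  refine ⟨max K0 0, le_max_right _ _, fun δ hδ => ?_⟩
  have h1 : P.eval δ - P.eval 0 = δ * Q.eval δ := by
    have := congrArg (Polynomial.eval δ) hQ
    simpa using this
  have hmem : δ ∈ Set.Icc (-1:ℝ) 1 := abs_le.mp hδ |>.imp id id |> fun h => ⟨h.1, h.2⟩
  have := hK0 δ hmem
  rw [h1, abs_mul, mul_comm]
  exact mul_le_mul_of_nonneg_right (le_trans (by simpa using this) (le_max_left _ _)) (abs_nonneg _)

lemma integral_mul_complex' {Ω : Type*} [MeasurableSpace Ω] {μ : Measure Ω}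
    [IsProbabilityMeasure μ]
    {X Y : Ω → ℂ} (h : IndepFun X Y μ) (hX : Integrable X μ) (hY : Integrable Y μ) :
    ∫ ω, X ω * Y ω ∂μ = (∫ ω, X ω ∂μ) * ∫ ω, Y ω ∂μ := by
  have hre : Measurable fun z : ℂ => z.re := Complex.measurable_re
  have him : Measurable fun z : ℂ => z.im := Complex.measurable_im
  have hXr : Integrable (fun ω => (X ω).re) μ := by simpa using hX.re
  have hXi : Integrable (fun ω => (X ω).im) μ := by simpa using hX.im
  have hYr : Integrable (fun ω => (Y ω).re) μ := by simpa using hY.re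
  have hYi : Integrable (fun ω => (Y ω).im) μ := by simpa using hY.im
  have irr : IndepFun (fun ω => (X ω).re) (fun ω => (Y ω).re) μ := h.comp hre hre
  have iri : IndepFun (fun ω => (X ω).re) (fun ω => (Y ω).im) μ := h.comp hre him
  have iir : IndepFun (fun ω => (X ω).im) (fun ω => (Y ω).re) μ := h.comp him hre
  have iii : IndepFun (fun ω => (X ω).im) (fun ω => (Y ω).im) μ := h.comp him him
  have h1 : Integrable (fun ω => (X ω).re * (Y ω).re) μ := irr.integrable_mul hXr hYr
  have h2 : Integrable (fun ω => (X ω).im * (Y ω).im) μ := iii.integrable_mul hXi hYi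
  have h3 : Integrable (fun ω => (X ω).re * (Y ω).im) μ := iri.integrable_mul hXr hYi
  have h4 : Integrable (fun ω => (X ω).im * (Y ω).re) μ := iir.integrable_mul hXi hYr
  have hXY : Integrable (fun ω => X ω * Y ω) μ := h.integrable_mul hX hY
  have e1 : ∫ ω, (X ω).re * (Y ω).re ∂μ = (∫ ω, (X ω).re ∂μ) * ∫ ω, (Y ω).re ∂μ :=
    irr.integral_fun_mul_eq_mul_integral hXr.aestronglyMeasurable hYr.aestronglyMeasurable
  have e2 : ∫ ω, (X ω).im * (Y ω).im ∂μ = (∫ ω, (X ω).im ∂μ) * ∫ ω, (Y ω).im ∂μ :=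
    iii.integral_fun_mul_eq_mul_integral hXi.aestronglyMeasurable hYi.aestronglyMeasurable
  have e3 : ∫ ω, (X ω).re * (Y ω).im ∂μ = (∫ ω, (X ω).re ∂μ) * ∫ ω, (Y ω).im ∂μ :=
    iri.integral_fun_mul_eq_mul_integral hXr.aestronglyMeasurable hYi.aestronglyMeasurable
  have e4 : ∫ ω, (X ω).im * (Y ω).re ∂μ = (∫ ω, (X ω).im ∂μ) * ∫ ω, (Y ω).re ∂μ :=
    iir.integral_fun_mul_eq_mul_integral hXi.aestronglyMeasurable hYr.aestronglyMeasurable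
  have hXre : (∫ ω, X ω ∂μ).re = ∫ ω, (X ω).re ∂μ := by simpa using (integral_re hX).symm
  have hXim : (∫ ω, X ω ∂μ).im = ∫ ω, (X ω).im ∂μ := by simpa using (integral_im hX).symm
  have hYre : (∫ ω, Y ω ∂μ).re = ∫ ω, (Y ω).re ∂μ := by simpa using (integral_re hY).symm
  have hYim : (∫ ω, Y ω ∂μ).im = ∫ ω, (Y ω).im ∂μ := by simpa using (integral_im hY).symm
  have h5 : (∫ ω, X ω * Y ω ∂μ).re = ∫ ω, (X ω * Y ω).re ∂μ := by
    simpa using (integral_re hXY).symm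
  have h6 : (∫ ω, X ω * Y ω ∂μ).im = ∫ ω, (X ω * Y ω).im ∂μ := by
    simpa using (integral_im hXY).symm
  apply Complex.ext
  · rw [h5]
    simp only [Complex.mul_re]
    rw [integral_sub h1 h2, e1, e2, hXre, hXim, hYre, hYim]
  · rw [h6]
    simp only [Complex.mul_im]
    rw [integral_add h3 h4, e3, e4, hXre, hXim, hYre, hYim]

def TstP (v t : ℝ) : Matrix (Fin 2) (Fin 2) (Polynomial ℝ) :=
  !![C (v/t) - C (1/t) * Polynomial.X, C (-t); C (1/t), 0]

lemma TstP_eval (v t ε : ℝ) (ht : t ≠ 0) :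
    (Polynomial.evalRingHom ε).mapMatrix (TstP v t) = Tst (v - ε) t := by
  ext i j
  fin_cases i <;> fin_cases j <;>
    simp [TstP, Tst, RingHom.mapMatrix_apply, Matrix.map_apply] <;> field_simp <;> ring

lemma blockPoly (Lh : ℕ) (v t : ℕ → ℝ) (Ec : ℝ) (ht : ∀ j, j < Lh → t j ≠ 0) :
    ∃ P : Matrix (Fin 2) (Fin 2) (Polynomial ℝ), ∀ ε,
      Tblock Lh v t (Ec + ε) = (Polynomial.evalRingHom ε).mapMatrix P := by
  refine ⟨((List.range Lh).reverse.map fun j => TstP (v j - Ec) (t j)).prod, fun ε => ?_⟩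
  rw [Tblock, map_list_prod, List.map_map]
  congr 1
  apply List.map_congr_left
  intro j hj
  have hj' : j < Lh := List.mem_range.mp (List.mem_reverse.mp hj)
  have := TstP_eval (v j - Ec) (t j) ε (ht j hj')
  simpa [sub_sub] using this.symm

lemma keyEst (A : Matrix (Fin 2) (Fin 2) ℝ) (η θ ρ S' Kd : ℝ) (hρ : 0 < ρ)
    (hvec : A.mulVec ![Real.cos θ, Real.sin θ] = ρ • ![Real.cos S', Real.sin S'])
    (hKd : ∀ i j, |(A - rotMat η) i j| ≤ Kd) :
    ‖Complex.exp (2*Complex.I*(S':ℂ)) -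
      Complex.exp (2*Complex.I*(η:ℂ)) * Complex.exp (2*Complex.I*(θ:ℂ))‖ ≤ 16 * Kd := by
  have hKd0 : 0 ≤ Kd := le_trans (abs_nonneg _) (hKd 0 0)
  set w : Fin 2 → ℝ := A.mulVec ![Real.cos θ, Real.sin θ] with hw
  have hw0 : w 0 = ρ * Real.cos S' := by rw [hvec]; simp
  have hw1 : w 1 = ρ * Real.sin S' := by rw [hvec]; simp
  set z : ℂ := (w 0 : ℂ) + (w 1 : ℂ) * Complex.I with hzdef
  set z0 : ℂ := Complex.exp (((θ + η : ℝ):ℂ) * Complex.I) with hz0def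
  have hz : z = (ρ:ℂ) * Complex.exp ((S':ℂ) * Complex.I) := by
    rw [hzdef, hw0, hw1, Complex.exp_mul_I, ← Complex.ofReal_cos, ← Complex.ofReal_sin]
    push_cast
    ring
  have habs0 : ‖z0‖ = 1 := Complex.norm_exp_ofReal_mul_I _
  have habsz : ‖z‖ = ρ := by
    rw [hz, norm_mul, Complex.norm_exp_ofReal_mul_I, Complex.norm_real, Real.norm_eq_abs, abs_of_pos hρ, mul_one]
  have hz0 : z0 = (Real.cos (θ+η) : ℂ) + (Real.sin (θ+η):ℂ) * Complex.I := by
    rw [hz0def, Complex.exp_mul_I, ← Complex.ofReal_cos, ← Complex.ofReal_sin]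
  have hrotv : (rotMat η).mulVec ![Real.cos θ, Real.sin θ]
      = ![Real.cos (θ+η), Real.sin (θ+η)] := by
    funext i
    fin_cases i <;>
      simp [rotMat, Matrix.mulVec, dotProduct, Fin.sum_univ_two, Real.cos_add,
        Real.sin_add] <;> ring
  have hdiff : ∀ i, |w i - ![Real.cos (θ+η), Real.sin (θ+η)] i| ≤ 2 * Kd := by
    intro i
    have h1 : w i - ![Real.cos (θ+η), Real.sin (θ+η)] i
        = ((A - rotMat η).mulVec ![Real.cos θ, Real.sin θ]) i := by
      rw [Matrix.sub_mulVec, hrotv, hw]; simp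
    have h2 : ((A - rotMat η).mulVec ![Real.cos θ, Real.sin θ]) i
        = (A - rotMat η) i 0 * Real.cos θ + (A - rotMat η) i 1 * Real.sin θ := by
      simp [Matrix.mulVec, dotProduct, Fin.sum_univ_two]
    rw [h1, h2]
    have b0 := hKd i 0
    have b1 := hKd i 1
    have c0 := Real.abs_cos_le_one θ
    have c1 := Real.abs_sin_le_one θ
    calc |(A - rotMat η) i 0 * Real.cos θ + (A - rotMat η) i 1 * Real.sin θ|
        ≤ |(A - rotMat η) i 0 * Real.cos θ| + |(A - rotMat η) i 1 * Real.sin θ| := abs_add_le _ _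
      _ = |(A - rotMat η) i 0| * |Real.cos θ| + |(A - rotMat η) i 1| * |Real.sin θ| := by
          rw [abs_mul, abs_mul]
      _ ≤ Kd * 1 + Kd * 1 := by
          gcongr <;> assumption
      _ = 2 * Kd := by ring
  have hzz0 : ‖z - z0‖ ≤ 4 * Kd := by
    have h0 := hdiff 0
    have h1 := hdiff 1
    simp only [Matrix.cons_val_zero, Matrix.cons_val_one, Matrix.head_cons] at h0 h1
    have heq : z - z0
        = ((w 0 - Real.cos (θ+η) : ℝ):ℂ) + ((w 1 - Real.sin (θ+η) : ℝ):ℂ)*Complex.I := by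
      rw [hzdef, hz0]; push_cast; ring
    rw [heq]
    calc ‖((w 0 - Real.cos (θ+η) : ℝ):ℂ) + ((w 1 - Real.sin (θ+η) : ℝ):ℂ)*Complex.I‖
        ≤ ‖((w 0 - Real.cos (θ+η) : ℝ):ℂ)‖
          + ‖((w 1 - Real.sin (θ+η) : ℝ):ℂ)*Complex.I‖ := norm_add_le _ _
      _ = |w 0 - Real.cos (θ+η)| + |w 1 - Real.sin (θ+η)| := by
          rw [norm_mul, Complex.norm_I, mul_one, Complex.norm_real, Complex.norm_real, Real.norm_eq_abs,
              Real.norm_eq_abs]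
      _ ≤ 2*Kd + 2*Kd := add_le_add h0 h1
      _ = 4 * Kd := by ring
  have hρne : (ρ:ℂ) ≠ 0 := by exact_mod_cast ne_of_gt hρ
  have hu1 : ‖z/(ρ:ℂ)‖ = 1 := by
    rw [norm_div, habsz, Complex.norm_real, Real.norm_eq_abs, abs_of_pos hρ, div_self (ne_of_gt hρ)]
  have hu : ‖z/(ρ:ℂ) - z0‖ ≤ 8 * Kd := by
    have l1 : ‖z/(ρ:ℂ) - z‖ = |1 - ρ| := by
      have e3 : z/(ρ:ℂ) - z = ((1/ρ - 1 : ℝ):ℂ) * z := by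
        push_cast
        field_simp
      rw [e3, norm_mul, Complex.norm_real, Real.norm_eq_abs, habsz]
      have e4 : (1:ℝ) - ρ = (1/ρ - 1) * ρ := by field_simp
      rw [e4, abs_mul, abs_of_pos hρ]
    have l2 : |1 - ρ| ≤ ‖z0 - z‖ := by
      have := abs_norm_sub_norm_le z0 z
      simpa [habs0, habsz] using this
    calc ‖z/(ρ:ℂ) - z0‖
        ≤ ‖z/(ρ:ℂ) - z‖ + ‖z - z0‖ := norm_sub_le_norm_sub_add_norm_sub _ _ _
      _ ≤ |1 - ρ| + 4*Kd := by rw [l1]; exact add_le_add_right hzz0 _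
      _ ≤ ‖z0 - z‖ + 4*Kd := add_le_add_left l2 _
      _ = ‖z - z0‖ + 4*Kd := by rw [norm_sub_rev]
      _ ≤ 4*Kd + 4*Kd := add_le_add_left hzz0 _
      _ = 8 * Kd := by ring
  have key2 : Complex.exp (2*Complex.I*(S':ℂ)) = (z/(ρ:ℂ))^2 := by
    rw [hz, mul_div_cancel_left₀ _ hρne, sq, ← Complex.exp_add]
    congr 1
    ring
  have key3 : Complex.exp (2*Complex.I*(η:ℂ)) * Complex.exp (2*Complex.I*(θ:ℂ)) = z0^2 := by
    rw [hz0def, sq, ← Complex.exp_add, ← Complex.exp_add]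
    congr 1
    push_cast
    ring
  rw [key2, key3]
  have e : (z/(ρ:ℂ))^2 - z0^2 = (z/(ρ:ℂ) - z0) * (z/(ρ:ℂ) + z0) := by ring
  rw [e, norm_mul]
  calc ‖z/(ρ:ℂ) - z0‖ * ‖z/(ρ:ℂ) + z0‖
      ≤ (8*Kd) * (‖z/(ρ:ℂ)‖ + ‖z0‖) :=
        mul_le_mul hu (norm_add_le _ _) (norm_nonneg _) (by positivity)
    _ = 16 * Kd := by rw [hu1, habs0]; ring

variable {P₀ : Measure (ℤ → Bool)} [IsProbabilityMeasure P₀]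

lemma measF (f : Bool → ℂ) (l : ℤ) : Measurable (fun ω : ℤ → Bool => f (ω l)) :=
  (measurable_of_countable f).comp (measurable_pi_apply l)

lemma intF (F : (ℤ → Bool) → ℂ) (hm : Measurable F) (hb : ∀ ω, ‖F ω‖ ≤ 1) :
    Integrable F P₀ :=
  (integrable_const (1:ℝ)).mono' hm.aestronglyMeasurable
    (Filter.Eventually.of_forall fun ω => by simpa using hb ω)

lemma singleIntegral (p : ℝ) (hp : 0 < p ∧ p < 1)
    (hber : ∀ l : ℤ, P₀ {ω | ω l = true} = ENNReal.ofReal p)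
    (f : Bool → ℂ) (l : ℤ) :
    ∫ ω, f (ω l) ∂P₀ = p * f true + (1 - p) * f false := by
  have hs : MeasurableSet {ω : ℤ → Bool | ω l = true} := by
    have hpre : {ω : ℤ → Bool | ω l = true} = (fun ω : ℤ → Bool => ω l) ⁻¹' {true} := by
      ext ω; simp
    rw [hpre]
    exact measurable_pi_apply l trivial
  have heq : (fun ω : ℤ → Bool => f (ω l))
      = fun ω => Set.indicator {ω : ℤ → Bool | ω l = true} (fun _ => f true - f false) ω
          + f false := by
    funext ω
    by_cases h : ω l = true
    · simp [Set.indicator_apply, Set.mem_setOf_eq, h]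
    · have : ω l = false := by simpa using h
      simp [Set.indicator_apply, Set.mem_setOf_eq, h, this]
  rw [heq, integral_add ((integrable_const _).indicator hs) (integrable_const _),
    integral_indicator_const _ hs, integral_const]
  have hμ : (P₀ {ω : ℤ → Bool | ω l = true}).toReal = p := by
    rw [hber l, ENNReal.toReal_ofReal hp.1.le]
  simp [measureReal_def, hμ, measure_univ]
  ring

lemma prodIntegral
    (hiid : ProbabilityTheory.iIndepFun (fun (l : ℤ) (ω : ℤ → Bool) => ω l) P₀)
    (f : Bool → ℂ) (hf1 : ∀ s, ‖f s‖ ≤ 1)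
    (a : ℂ) (ha : ∀ l : ℤ, ∫ ω, f (ω l) ∂P₀ = a) :
    ∀ r : ℕ, ∫ ω, ∏ l ∈ Finset.range r, f (ω (l:ℤ)) ∂P₀ = a ^ r := by
  have hg : iIndepFun (fun l (ω : ℤ → Bool) => f (ω l)) P₀ :=
    hiid.comp (fun _ => f) (fun _ => measurable_of_countable f)
  have hprodmeas : ∀ r : ℕ, Measurable (fun ω : ℤ → Bool => ∏ l ∈ Finset.range r, f (ω (l:ℤ))) :=
    fun r => Finset.measurable_prod _ (fun l _ => measF f l)
  have hprodbd : ∀ r : ℕ, ∀ ω : ℤ → Bool,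
      ‖∏ l ∈ Finset.range r, f (ω (l:ℤ))‖ ≤ 1 := by
    intro r ω
    rw [norm_prod]
    exact Finset.prod_le_one (fun l _ => norm_nonneg _) (fun l _ => hf1 _)
  intro r
  induction r with
  | zero => simp
  | succ r ih =>
    have hsplit : (fun ω : ℤ → Bool => ∏ l ∈ Finset.range (r+1), f (ω (l:ℤ)))
        = fun ω => (∏ l ∈ Finset.range r, f (ω (l:ℤ))) * f (ω (r:ℤ)) := by
      funext ω
      rw [Finset.prod_range_succ]
    rw [hsplit]
    have hindep : IndepFun (fun ω : ℤ → Bool => ∏ l ∈ Finset.range r, f (ω (l:ℤ)))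
        (fun ω : ℤ → Bool => f (ω (r:ℤ))) P₀ := by
      have hnot : (r : ℤ) ∉ (Finset.range r).image (Nat.cast : ℕ → ℤ) := by
        simp only [Finset.mem_image, Finset.mem_range]
        rintro ⟨m, hm, hcast⟩
        omega
      have := hg.indepFun_finsetProd_of_notMem (fun l => measF f l) hnot
      have hre : (∏ j ∈ (Finset.range r).image (Nat.cast : ℕ → ℤ),
            (fun ω : ℤ → Bool => f (ω j)))
          = fun ω : ℤ → Bool => ∏ l ∈ Finset.range r, f (ω (l:ℤ)) := by
        funext ω
        rw [Finset.prod_apply]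
        rw [Finset.prod_image (fun a _ b _ h => by exact_mod_cast h)]
      rwa [hre] at this
    rw [integral_mul_complex' hindep
      (intF _ (hprodmeas r) (hprodbd r)) (intF _ (measF f _) (fun ω => hf1 _)), ih, ha,
      pow_succ]

lemma abs_exp_two_I (x : ℝ) : ‖Complex.exp (2*Complex.I*(x:ℂ))‖ = 1 := by
  rw [Complex.norm_exp]
  simp

end Stmt10Aux

/-- Decoupling lemma: the iterated phase is, up to small errors, a centered random
variable times `e^{2iθ}` (Lemma 4 of the paper). -/
theorem stmt10
    (L : Bool → ℕ) (hL : ∀ s, 1 ≤ L s) (vh th : Bool → ℕ → ℝ)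
    (hth : ∀ s j, j < L s → 0 < th s j) (Ec : ℝ)
    (hcomm : Tpoly L vh th Ec true * Tpoly L vh th Ec false
           = Tpoly L vh th Ec false * Tpoly L vh th Ec true)
    (hell : ∀ s, |(Tpoly L vh th Ec s).trace| < 2 ∨
      Tpoly L vh th Ec s = 1 ∨ Tpoly L vh th Ec s = -1)
    (M : Matrix (Fin 2) (Fin 2) ℝ) (hM : IsUnit M.det) (η : Bool → ℝ)
    (hrot : ∀ s, M * Tpoly L vh th Ec s * M⁻¹ = rotMat (η s))
    (p : ℝ) (hp : 0 < p ∧ p < 1) (P₀ : Measure (ℤ → Bool))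
    [IsProbabilityMeasure P₀]
    (hiid : ProbabilityTheory.iIndepFun (fun (l : ℤ) (ω : ℤ → Bool) => ω l) P₀)
    (hber : ∀ l : ℤ, P₀ {ω | ω l = true} = ENNReal.ofReal p)
    (hκ : ‖avgC p (fun s => Complex.exp (2 * Complex.I * (η s : ℂ)))‖ < 1)
    (S ρ : Bool → ℝ → ℝ → ℝ)
    (hSρ : ∀ s ε θ, 0 < ρ s ε θ ∧
      (M * Tpoly L vh th (Ec + ε) s * M⁻¹).mulVec ![Real.cos θ, Real.sin θ]
        = ρ s ε θ • ![Real.cos (S s ε θ), Real.sin (S s ε θ)])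
    (hScont : ∀ s, Continuous fun q : ℝ × ℝ => S s q.1 q.2)
    (hSper : ∀ s ε θ, S s ε (θ + Real.pi) = S s ε θ + Real.pi)
    (hSnorm : ∀ s θ, S s 0 θ = θ + η s)
    :
    ∃ C δ₀ : ℝ, 0 < C ∧ 0 < δ₀ ∧ ∀ (r : ℕ) (δ : ℝ), |δ| ≤ δ₀ → ∀ θ : ℝ,
      ∃ X : (ℤ → Bool) → ℂ, Measurable X ∧
        (∀ ω ω' : ℤ → Bool, (∀ l : ℕ, l < r → ω (l : ℤ) = ω' (l : ℤ)) → X ω = X ω') ∧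
        (∫ ω, X ω ∂P₀) = 0 ∧ (∀ ω, ‖X ω‖ ≤ 2) ∧
        ∀ ω : ℤ → Bool,
          ‖Complex.exp (2 * Complex.I * (Sit S ω δ r θ : ℂ)) -
              X ω * Complex.exp (2 * Complex.I * (θ : ℂ))‖
            ≤ C * ((r : ℝ) * |δ| +
                ‖avgC p (fun s => Complex.exp (2 * Complex.I * (η s : ℂ)))‖ ^ r) := by
  classical
  have hK : ∀ s : Bool, ∃ K : ℝ, 0 ≤ K ∧ ∀ δ : ℝ, |δ| ≤ 1 → ∀ i j,
      |(M * Tpoly L vh th (Ec + δ) s * M⁻¹ - rotMat (η s)) i j| ≤ K * |δ| := by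
    intro s
    obtain ⟨PA, hPA⟩ : ∃ P : Matrix (Fin 2) (Fin 2) (Polynomial ℝ), ∀ ε,
        M * Tpoly L vh th (Ec + ε) s * M⁻¹ = (Polynomial.evalRingHom ε).mapMatrix P := by
      obtain ⟨Pb, hPb⟩ := Stmt10Aux.blockPoly (L s) (vh s) (th s) Ec
        (fun j hj => (hth s j hj).ne')
      refine ⟨(M.map Polynomial.C) * Pb * ((M⁻¹).map Polynomial.C), fun ε => ?_⟩
      rw [Tpoly, hPb ε, map_mul, map_mul]
      congr 1
      · congr 1
        ext i j
        simp [RingHom.mapMatrix_apply, Matrix.map_apply]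
      · ext i j
        simp [RingHom.mapMatrix_apply, Matrix.map_apply]
    have hA0 : rotMat (η s) = (Polynomial.evalRingHom 0).mapMatrix PA := by
      rw [← hrot s]
      have := hPA 0
      rwa [add_zero] at this
    obtain ⟨K00, h00n, h00⟩ := Stmt10Aux.polyLip (PA 0 0)
    obtain ⟨K01, h01n, h01⟩ := Stmt10Aux.polyLip (PA 0 1)
    obtain ⟨K10, h10n, h10⟩ := Stmt10Aux.polyLip (PA 1 0)
    obtain ⟨K11, h11n, h11⟩ := Stmt10Aux.polyLip (PA 1 1)
    refine ⟨K00 + K01 + K10 + K11, by linarith, fun δ hδ i j => ?_⟩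
    have hentry : ∀ i j : Fin 2, (M * Tpoly L vh th (Ec + δ) s * M⁻¹ - rotMat (η s)) i j
        = (PA i j).eval δ - (PA i j).eval 0 := by
      intro i j
      rw [Matrix.sub_apply, hPA δ, hA0]
      simp [RingHom.mapMatrix_apply, Matrix.map_apply]
    rw [hentry i j]
    have habs := abs_nonneg δ
    fin_cases i <;> fin_cases j
    · exact le_trans (h00 δ hδ) (by nlinarith)
    · exact le_trans (h01 δ hδ) (by nlinarith)
    · exact le_trans (h10 δ hδ) (by nlinarith)
    · exact le_trans (h11 δ hδ) (by nlinarith)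
  obtain ⟨Kt, hKtn, hKt⟩ := hK true
  obtain ⟨Kf, hKfn, hKf⟩ := hK false
  set Ks : ℝ := max Kt Kf with hKs
  have hKsn : 0 ≤ Ks := le_trans hKtn (le_max_left _ _)
  have hKg : ∀ s : Bool, ∀ δ : ℝ, |δ| ≤ 1 → ∀ i j,
      |(M * Tpoly L vh th (Ec + δ) s * M⁻¹ - rotMat (η s)) i j| ≤ Ks * |δ| := by
    intro s δ hδ i j
    cases s
    · exact le_trans (hKf δ hδ i j)
        (mul_le_mul_of_nonneg_right (le_max_right _ _) (abs_nonneg δ))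
    · exact le_trans (hKt δ hδ i j)
        (mul_le_mul_of_nonneg_right (le_max_left _ _) (abs_nonneg δ))
  have key : ∀ (s : Bool) (δ θ' : ℝ), |δ| ≤ 1 →
      ‖Complex.exp (2 * Complex.I * ((S s δ θ' : ℝ) : ℂ)) -
        Complex.exp (2 * Complex.I * (η s : ℂ)) * Complex.exp (2 * Complex.I * (θ' : ℂ))‖
        ≤ 16 * (Ks * |δ|) := by
    intro s δ θ' hδ
    obtain ⟨hρpos, hvec⟩ := hSρ s δ θ'
    exact Stmt10Aux.keyEst (M * Tpoly L vh th (Ec + δ) s * M⁻¹) (η s) θ' (ρ s δ θ')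
      (S s δ θ') (Ks * |δ|) hρpos hvec (hKg s δ hδ)
  refine ⟨16 * Ks + 1, 1, by positivity, one_pos, fun r δ hδ θ => ?_⟩
  set f : Bool → ℂ := fun s => Complex.exp (2 * Complex.I * (η s : ℂ)) with hfdef
  have hf1 : ∀ s, ‖f s‖ = 1 := fun s => Stmt10Aux.abs_exp_two_I (η s)
  set a : ℂ := avgC p f with hadef
  have hsing : ∀ l : ℤ, ∫ ω, f (ω l) ∂P₀ = a := by
    intro l
    rw [Stmt10Aux.singleIntegral p hp hber f l]
    simp [hadef, avgC]
  have hprod := Stmt10Aux.prodIntegral hiid f (fun s => (hf1 s).le) a hsing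
  have hmeasprod : Measurable (fun ω : ℤ → Bool => ∏ l ∈ Finset.range r, f (ω (l:ℤ))) :=
    Finset.measurable_prod _ (fun l _ => Stmt10Aux.measF f _)
  have hbdprod : ∀ ω : ℤ → Bool, ‖∏ l ∈ Finset.range r, f (ω (l:ℤ))‖ ≤ 1 := by
    intro ω
    rw [norm_prod]
    exact Finset.prod_le_one (fun l _ => norm_nonneg _) (fun l _ => (hf1 _).le)
  have hκ1 : ‖a‖ ≤ 1 := hκ.le
  have hapow : ‖a ^ r‖ ≤ 1 := by
    rw [norm_pow]
    exact pow_le_one₀ (norm_nonneg _) hκ1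
  have iter : ∀ (ω : ℤ → Bool) (n : ℕ),
      ‖Complex.exp (2 * Complex.I * ((Sit S ω δ n θ : ℝ) : ℂ)) -
        (∏ l ∈ Finset.range n, f (ω (l:ℤ))) * Complex.exp (2 * Complex.I * (θ : ℂ))‖
        ≤ n * (16 * (Ks * |δ|)) := by
    intro ω n
    induction n with
    | zero => simp [Sit]
    | succ n ih =>
      have hstep : Sit S ω δ (n+1) θ = S (ω n) δ (Sit S ω δ n θ) := rfl
      set θn : ℝ := Sit S ω δ n θ with hθn
      rw [hstep]
      have h2 : (∏ l ∈ Finset.range (n+1), f (ω (l:ℤ)))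
          = (∏ l ∈ Finset.range n, f (ω (l:ℤ))) * f (ω (n:ℤ)) := Finset.prod_range_succ _ _
      calc ‖Complex.exp (2 * Complex.I * ((S (ω n) δ θn : ℝ) : ℂ)) -
            (∏ l ∈ Finset.range (n+1), f (ω (l:ℤ))) * Complex.exp (2 * Complex.I * (θ : ℂ))‖
          ≤ ‖Complex.exp (2 * Complex.I * ((S (ω n) δ θn : ℝ) : ℂ)) -
              f (ω (n:ℤ)) * Complex.exp (2 * Complex.I * (θn : ℂ))‖
            + ‖f (ω (n:ℤ)) * Complex.exp (2 * Complex.I * (θn : ℂ)) -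
              (∏ l ∈ Finset.range (n+1), f (ω (l:ℤ))) * Complex.exp (2 * Complex.I * (θ : ℂ))‖ :=
            norm_sub_le_norm_sub_add_norm_sub _ _ _
        _ ≤ 16 * (Ks * |δ|) + n * (16 * (Ks * |δ|)) := by
            apply add_le_add
            · exact key (ω n) δ θn hδ
            · have hsplit : f (ω (n:ℤ)) * Complex.exp (2 * Complex.I * (θn : ℂ)) -
                  (∏ l ∈ Finset.range (n+1), f (ω (l:ℤ))) * Complex.exp (2 * Complex.I * (θ : ℂ))
                  = f (ω (n:ℤ)) * (Complex.exp (2 * Complex.I * (θn : ℂ)) -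
                    (∏ l ∈ Finset.range n, f (ω (l:ℤ))) * Complex.exp (2 * Complex.I * (θ : ℂ)))
                  := by
                rw [h2]; ring
              rw [hsplit, norm_mul, hf1]
              simpa using ih
        _ = ((n+1 : ℕ) : ℝ) * (16 * (Ks * |δ|)) := by push_cast; ring
  refine ⟨fun ω => (∏ l ∈ Finset.range r, f (ω (l:ℤ))) - a ^ r, ?_, ?_, ?_, ?_, ?_⟩
  · exact hmeasprod.sub measurable_const
  · intro ω ω' hag
    have heqp : (∏ l ∈ Finset.range r, f (ω (l:ℤ))) = ∏ l ∈ Finset.range r, f (ω' (l:ℤ)) :=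
      Finset.prod_congr rfl (fun l hl => by rw [hag l (Finset.mem_range.mp hl)])
    show (∏ l ∈ Finset.range r, f (ω (l:ℤ))) - a ^ r
        = (∏ l ∈ Finset.range r, f (ω' (l:ℤ))) - a ^ r
    rw [heqp]
  · rw [integral_sub (Stmt10Aux.intF _ hmeasprod hbdprod) (integrable_const _), hprod r,
      integral_const]
    simp [measure_univ]
  · intro ω
    calc ‖(∏ l ∈ Finset.range r, f (ω (l:ℤ))) - a ^ r‖
        ≤ ‖∏ l ∈ Finset.range r, f (ω (l:ℤ))‖ + ‖a ^ r‖ := by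
          have := norm_add_le (∏ l ∈ Finset.range r, f (ω (l:ℤ))) (-(a ^ r))
          simpa [sub_eq_add_neg] using this
      _ ≤ 1 + 1 := add_le_add (hbdprod ω) hapow
      _ = 2 := by norm_num
  · intro ω
    have hiter := iter ω r
    have hsplit : Complex.exp (2 * Complex.I * ((Sit S ω δ r θ : ℝ) : ℂ)) -
        ((∏ l ∈ Finset.range r, f (ω (l:ℤ))) - a ^ r) * Complex.exp (2 * Complex.I * (θ : ℂ))
        = (Complex.exp (2 * Complex.I * ((Sit S ω δ r θ : ℝ) : ℂ)) -
            (∏ l ∈ Finset.range r, f (ω (l:ℤ))) * Complex.exp (2 * Complex.I * (θ : ℂ)))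
          + a ^ r * Complex.exp (2 * Complex.I * (θ : ℂ)) := by ring
    have habse : ‖Complex.exp (2 * Complex.I * (θ : ℂ))‖ = 1 :=
      Stmt10Aux.abs_exp_two_I θ
    have hrd : 0 ≤ (r : ℝ) * |δ| := mul_nonneg (Nat.cast_nonneg r) (abs_nonneg δ)
    have hpw : 0 ≤ ‖a‖ ^ r := pow_nonneg (norm_nonneg _) r
    calc ‖Complex.exp (2 * Complex.I * ((Sit S ω δ r θ : ℝ) : ℂ)) -
          ((∏ l ∈ Finset.range r, f (ω (l:ℤ))) - a ^ r) * Complex.exp (2 * Complex.I * (θ : ℂ))‖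
        ≤ ‖Complex.exp (2 * Complex.I * ((Sit S ω δ r θ : ℝ) : ℂ)) -
            (∏ l ∈ Finset.range r, f (ω (l:ℤ))) * Complex.exp (2 * Complex.I * (θ : ℂ))‖
          + ‖a ^ r * Complex.exp (2 * Complex.I * (θ : ℂ))‖ := by
          rw [hsplit]
          exact norm_add_le _ _
      _ ≤ r * (16 * (Ks * |δ|)) + ‖a‖ ^ r := by
          apply add_le_add hiter
          rw [norm_mul, habse, mul_one, norm_pow]
      _ ≤ (16 * Ks + 1) * ((r : ℝ) * |δ| + ‖a‖ ^ r) := by nlinarith
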